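/- arXiv:1310.6914 — 2 statements merged into one kernel-verified Lean document; each statement's English description precedes it below -/
import Mathlib

section
/- Let σ be an n-dimensional polyhedral cone in ℝⁿ and let Σ' be a finite fan subdividing σ (i.e. the union of the cones of Σ' equals σ). Let T be the set of cones τ ∈ Σ' whose relative interior is contained in the relative interior of σ. Then Σ_{τ ∈ T} (-1)^{dim τ} = (-1)^{dim σ}. Equivalently, the relative interiors of the cones in T form a partition of the relative interior of σ, and the alternating sum of their Euler characteristics with compact supports equals that of an open n-cell. -/
open scoped Classical
open Filter Topology Set Function

/-- A (convex) polyhedral cone in `ℝⁿ`: the set of nonnegative combinations of finitely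
many vectors. -/
def IsPolyhedralCone {n : ℕ} (C : Set (Fin n → ℝ)) : Prop :=
  ∃ (m : ℕ) (v : Fin m → (Fin n → ℝ)),
    C = {x | ∃ c : Fin m → ℝ, (∀ i, 0 ≤ c i) ∧ x = ∑ i, c i • v i}


namespace Stmt4

/-- Indicator with value 1. -/
noncomputable def ind {α : Type*} (S : Set α) (x : α) : ℝ := if x ∈ S then 1 else 0

lemma ind_of_mem {α : Type*} {S : Set α} {x : α} (h : x ∈ S) : ind S x = 1 := if_pos h
lemma ind_of_not_mem {α : Type*} {S : Set α} {x : α} (h : x ∉ S) : ind S x = 0 := if_neg h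

noncomputable def llim (g : ℝ → ℝ) (x : ℝ) : ℝ := limUnder (𝓝[<] x) g
noncomputable def rlim (g : ℝ → ℝ) (x : ℝ) : ℝ := limUnder (𝓝[>] x) g
noncomputable def defect (g : ℝ → ℝ) (x : ℝ) : ℝ := g x - (llim g x + rlim g x) / 2

/-- One-dimensional Euler integral (w.r.t. compactly supported Euler characteristic). -/
noncomputable def Estep (g : ℝ → ℝ) : ℝ :=
  (∑ᶠ x, defect g x) - (limUnder atBot g + limUnder atTop g) / 2

structure Tame (g : ℝ → ℝ) : Prop where
  left : ∀ x, Tendsto g (𝓝[<] x) (𝓝 (llim g x))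
  right : ∀ x, Tendsto g (𝓝[>] x) (𝓝 (rlim g x))
  bot : Tendsto g atBot (𝓝 (limUnder atBot g))
  top : Tendsto g atTop (𝓝 (limUnder atTop g))
  fin : (Function.support (defect g)).Finite

lemma llim_eq {g : ℝ → ℝ} {x l : ℝ} (h : Tendsto g (𝓝[<] x) (𝓝 l)) :
    llim g x = l := h.limUnder_eq

lemma rlim_eq {g : ℝ → ℝ} {x l : ℝ} (h : Tendsto g (𝓝[>] x) (𝓝 l)) :
    rlim g x = l := h.limUnder_eq

lemma tame_of_lims {g : ℝ → ℝ} (L R : ℝ → ℝ) {B T : ℝ}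
    (hL : ∀ x, Tendsto g (𝓝[<] x) (𝓝 (L x)))
    (hR : ∀ x, Tendsto g (𝓝[>] x) (𝓝 (R x)))
    (hB : Tendsto g atBot (𝓝 B)) (hT : Tendsto g atTop (𝓝 T))
    (hfin : (Function.support (defect g)).Finite) : Tame g := by
  refine ⟨fun x => ?_, fun x => ?_, ?_, ?_, hfin⟩
  · rw [llim_eq (hL x)]; exact hL x
  · rw [rlim_eq (hR x)]; exact hR x
  · rw [(hB).limUnder_eq]; exact hB
  · rw [(hT).limUnder_eq]; exact hT

lemma Tame.add {g h : ℝ → ℝ} (hg : Tame g) (hh : Tame h) : Tame (g + h) := by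
  refine tame_of_lims (fun x => llim g x + llim h x) (fun x => rlim g x + rlim h x)
    (fun x => (hg.left x).add (hh.left x)) (fun x => (hg.right x).add (hh.right x))
    ((hg.bot).add hh.bot) ((hg.top).add hh.top) ?_
  · refine (hg.fin.union hh.fin).subset ?_
    intro x hx
    by_contra hc
    simp only [Set.mem_union, Function.mem_support, not_or, not_not] at hc
    apply hx
    have e1 : llim (g + h) x = llim g x + llim h x := llim_eq ((hg.left x).add (hh.left x))
    have e2 : rlim (g + h) x = rlim g x + rlim h x := rlim_eq ((hg.right x).add (hh.right x))
    have dgh : defect (g + h) x = defect g x + defect h x := by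
      simp only [defect, e1, e2, Pi.add_apply]; ring
    rw [dgh, hc.1, hc.2, add_zero]

lemma defect_add {g h : ℝ → ℝ} (hg : Tame g) (hh : Tame h) (x : ℝ) :
    defect (g + h) x = defect g x + defect h x := by
  have e1 : llim (g + h) x = llim g x + llim h x := llim_eq ((hg.left x).add (hh.left x))
  have e2 : rlim (g + h) x = rlim g x + rlim h x := rlim_eq ((hg.right x).add (hh.right x))
  simp only [defect, e1, e2, Pi.add_apply]; ring

lemma Estep_add {g h : ℝ → ℝ} (hg : Tame g) (hh : Tame h) :
    Estep (g + h) = Estep g + Estep h := by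
  have e1 : limUnder atBot (g + h) = limUnder atBot g + limUnder atBot h :=
    ((hg.bot).add hh.bot).limUnder_eq
  have e2 : limUnder atTop (g + h) = limUnder atTop g + limUnder atTop h :=
    ((hg.top).add hh.top).limUnder_eq
  have e3 : (∑ᶠ x, defect (g + h) x) = (∑ᶠ x, defect g x) + ∑ᶠ x, defect h x := by
    rw [← finsum_add_distrib hg.fin hh.fin]
    exact finsum_congr (defect_add hg hh)
  rw [Estep, Estep, Estep, e1, e2, e3]; ring

lemma Tame.const_mul {g : ℝ → ℝ} (hg : Tame g) (a : ℝ) : Tame (fun x => a * g x) := by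
  refine tame_of_lims (fun x => a * llim g x) (fun x => a * rlim g x)
    (fun x => (hg.left x).const_mul a) (fun x => (hg.right x).const_mul a)
    ((hg.bot).const_mul a) ((hg.top).const_mul a) ?_
  refine hg.fin.subset ?_
  intro x hx
  by_contra hc
  simp only [Function.mem_support, not_not] at hc
  apply hx
  have e1 : llim (fun y => a * g y) x = a * llim g x := llim_eq ((hg.left x).const_mul a)
  have e2 : rlim (fun y => a * g y) x = a * rlim g x := rlim_eq ((hg.right x).const_mul a)
  have : defect (fun y => a * g y) x = a * defect g x := by
    simp only [defect, e1, e2]; ring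
  rw [this, hc, mul_zero]

lemma Estep_const_mul {g : ℝ → ℝ} (hg : Tame g) (a : ℝ) :
    Estep (fun x => a * g x) = a * Estep g := by
  have e1 : limUnder atBot (fun x => a * g x) = a * limUnder atBot g :=
    ((hg.bot).const_mul a).limUnder_eq
  have e2 : limUnder atTop (fun x => a * g x) = a * limUnder atTop g :=
    ((hg.top).const_mul a).limUnder_eq
  have ed : ∀ x, defect (fun y => a * g y) x = a * defect g x := by
    intro x
    have d1 : llim (fun y => a * g y) x = a * llim g x := llim_eq ((hg.left x).const_mul a)
    have d2 : rlim (fun y => a * g y) x = a * rlim g x := rlim_eq ((hg.right x).const_mul a)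
    simp only [defect, d1, d2]; ring
  have e3 : (∑ᶠ x, defect (fun y => a * g y) x) = a * ∑ᶠ x, defect g x := by
    rw [finsum_congr ed, ← mul_finsum _ _]
  rw [Estep, Estep, e1, e2, e3]; ring

lemma Tame.sum {ι : Type*} {s : Finset ι} {h : ι → ℝ → ℝ}
    (hh : ∀ i ∈ s, Tame (h i)) : Tame (fun x => ∑ i ∈ s, h i x) := by
  classical
  induction s using Finset.induction_on with
  | empty =>
      simp only [Finset.sum_empty]
      exact tame_of_lims (fun _ => 0) (fun _ => 0)
        (fun x => tendsto_const_nhds) (fun x => tendsto_const_nhds)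
        tendsto_const_nhds tendsto_const_nhds
        (by
          have : ∀ x, defect (fun _ : ℝ => (0:ℝ)) x = 0 := by
            intro x
            have d1 : llim (fun _ : ℝ => (0:ℝ)) x = 0 := llim_eq tendsto_const_nhds
            have d2 : rlim (fun _ : ℝ => (0:ℝ)) x = 0 := rlim_eq tendsto_const_nhds
            simp [defect, d1, d2]
          refine Set.Finite.subset (Set.finite_empty) ?_
          intro x hx; exact absurd (this x) hx)
  | insert b t hnotmem ih =>
      have hb : Tame (h b) := hh b (Finset.mem_insert_self b t)
      have ht : Tame (fun x => ∑ i ∈ t, h i x) :=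
        ih (fun i hi => hh i (Finset.mem_insert_of_mem hi))
      have := hb.add ht
      simp only [Finset.sum_insert hnotmem]
      exact this

lemma Estep_sum {ι : Type*} {s : Finset ι} {h : ι → ℝ → ℝ}
    (hh : ∀ i ∈ s, Tame (h i)) :
    Estep (fun x => ∑ i ∈ s, h i x) = ∑ i ∈ s, Estep (h i) := by
  classical
  induction s using Finset.induction_on with
  | empty =>
      simp only [Finset.sum_empty]
      have d0 : ∀ x, defect (fun _ : ℝ => (0:ℝ)) x = 0 := by
        intro x
        have d1 : llim (fun _ : ℝ => (0:ℝ)) x = 0 := llim_eq tendsto_const_nhds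
        have d2 : rlim (fun _ : ℝ => (0:ℝ)) x = 0 := rlim_eq tendsto_const_nhds
        simp [defect, d1, d2]
      have l1 : limUnder atBot (fun _ : ℝ => (0:ℝ)) = 0 :=
        (tendsto_const_nhds : Tendsto _ atBot (𝓝 (0:ℝ))).limUnder_eq
      have l2 : limUnder atTop (fun _ : ℝ => (0:ℝ)) = 0 :=
        (tendsto_const_nhds : Tendsto _ atTop (𝓝 (0:ℝ))).limUnder_eq
      rw [Estep, finsum_congr d0, l1, l2]
      simp
  | insert b t hnotmem ih =>
      have hb : Tame (h b) := hh b (Finset.mem_insert_self b t)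
      have ht : Tame (fun x => ∑ i ∈ t, h i x) :=
        Tame.sum (fun i hi => hh i (Finset.mem_insert_of_mem hi))
      simp only [Finset.sum_insert hnotmem]
      rw [← ih (fun i hi => hh i (Finset.mem_insert_of_mem hi))]
      exact Estep_add hb ht


lemma tendsto_ind_one {S : Set ℝ} {l : Filter ℝ} (h : ∀ᶠ y in l, y ∈ S) :
    Tendsto (ind S) l (𝓝 1) := by
  refine Tendsto.congr' ?_ (tendsto_const_nhds (α := ℝ))
  filter_upwards [h] with y hy
  exact (ind_of_mem hy).symm

lemma tendsto_ind_zero {S : Set ℝ} {l : Filter ℝ} (h : ∀ᶠ y in l, y ∉ S) :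
    Tendsto (ind S) l (𝓝 0) := by
  refine Tendsto.congr' ?_ (tendsto_const_nhds (α := ℝ))
  filter_upwards [h] with y hy
  exact (ind_of_not_mem hy).symm

lemma tame_estep_of (g : ℝ → ℝ) (L R : ℝ → ℝ) (B T : ℝ) (s : Finset ℝ)
    (hL : ∀ x, Tendsto g (𝓝[<] x) (𝓝 (L x)))
    (hR : ∀ x, Tendsto g (𝓝[>] x) (𝓝 (R x)))
    (hB : Tendsto g atBot (𝓝 B)) (hT : Tendsto g atTop (𝓝 T))
    (hsupp : ∀ x, x ∉ s → g x - (L x + R x) / 2 = 0) :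
    Tame g ∧ Estep g = (∑ x ∈ s, (g x - (L x + R x) / 2)) - (B + T) / 2 := by
  have hdef : ∀ x, defect g x = g x - (L x + R x) / 2 := by
    intro x; rw [defect, llim_eq (hL x), rlim_eq (hR x)]
  have hss : Function.support (defect g) ⊆ (s : Set ℝ) := by
    intro x hx
    by_contra hc
    exact hx (by rw [hdef x]; exact hsupp x hc)
  constructor
  · exact tame_of_lims L R hL hR hB hT ((s.finite_toSet).subset hss)
  · rw [Estep, hB.limUnder_eq, hT.limUnder_eq,
      finsum_eq_sum_of_support_subset _ hss]
    exact congrArg (fun z => z - (B + T) / 2) (Finset.sum_congr rfl fun x _ => hdef x)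

lemma tame_estep_Ioo {a b : ℝ} (hab : a < b) :
    Tame (ind (Ioo a b)) ∧ Estep (ind (Ioo a b)) = -1 := by
  have hL : ∀ x, Tendsto (ind (Ioo a b)) (𝓝[<] x)
      (𝓝 (if a < x ∧ x ≤ b then 1 else 0)) := by
    intro x
    by_cases h1 : a < x ∧ x ≤ b
    · rw [if_pos h1]
      exact tendsto_ind_one (eventually_of_mem
        (Ioo_mem_nhdsLT_of_mem ⟨h1.1, h1.2⟩) (fun y hy => hy))
    · rw [if_neg h1]
      push_neg at h1
      rcases le_or_gt x a with hxa | hax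
      · exact tendsto_ind_zero (eventually_of_mem self_mem_nhdsWithin
          (fun y (hy : y ∈ Iio x) hm => absurd hm.1 (by simp only [Set.mem_Iio] at hy; linarith)))
      · have hbx : b < x := h1 hax
        exact tendsto_ind_zero (eventually_of_mem
          (Ioo_mem_nhdsLT_of_mem (⟨hbx, le_refl x⟩ : x ∈ Ioc b x))
          (fun y hy hm => absurd hm.2 (by exact not_lt.2 hy.1.le)))
  have hR : ∀ x, Tendsto (ind (Ioo a b)) (𝓝[>] x)
      (𝓝 (if a ≤ x ∧ x < b then 1 else 0)) := by
    intro x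
    by_cases h1 : a ≤ x ∧ x < b
    · rw [if_pos h1]
      exact tendsto_ind_one (eventually_of_mem
        (Ioo_mem_nhdsGT_of_mem ⟨h1.1, h1.2⟩) (fun y hy => hy))
    · rw [if_neg h1]
      push_neg at h1
      rcases lt_or_ge x a with hxa | hax
      · exact tendsto_ind_zero (eventually_of_mem
          (Ioo_mem_nhdsGT_of_mem (⟨le_refl x, hxa⟩ : x ∈ Ico x a))
          (fun y hy hm => absurd hm.1 (not_lt.2 hy.2.le)))
      · have hbx : b ≤ x := h1 hax
        exact tendsto_ind_zero (eventually_of_mem self_mem_nhdsWithin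
          (fun y (hy : y ∈ Ioi x) hm => absurd hm.2
            (by simp only [Set.mem_Ioi] at hy; linarith)))
  have hB : Tendsto (ind (Ioo a b)) atBot (𝓝 0) :=
    tendsto_ind_zero (eventually_of_mem (Iio_mem_atBot a)
      (fun y hy hm => absurd hm.1 (not_lt.2 (le_of_lt hy))))
  have hT : Tendsto (ind (Ioo a b)) atTop (𝓝 0) :=
    tendsto_ind_zero (eventually_of_mem (Ioi_mem_atTop b)
      (fun y hy hm => absurd hm.2 (not_lt.2 (le_of_lt hy))))
  obtain ⟨ht, he⟩ := tame_estep_of (ind (Ioo a b)) _ _ 0 0 {a, b} hL hR hB hT (by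
    intro x hx
    simp only [Finset.mem_insert, Finset.mem_singleton, not_or] at hx
    by_cases hm : x ∈ Ioo a b
    · rw [ind_of_mem hm, if_pos ⟨hm.1, hm.2.le⟩, if_pos ⟨hm.1.le, hm.2⟩]; ring
    · rw [ind_of_not_mem hm]
      rw [Set.mem_Ioo, not_and_or, not_lt, not_lt] at hm
      rcases hm with hxa | hbx
      · have hxa' : x < a := lt_of_le_of_ne hxa hx.1
        rw [if_neg (by rintro ⟨h, -⟩; linarith), if_neg (by rintro ⟨h, -⟩; linarith)]; ring
      · have hbx' : b < x := lt_of_le_of_ne hbx (Ne.symm hx.2)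
        rw [if_neg (by rintro ⟨-, h⟩; linarith), if_neg (by rintro ⟨-, h⟩; linarith)]; ring)
  refine ⟨ht, ?_⟩
  rw [he, Finset.sum_pair hab.ne]
  rw [ind_of_not_mem (by simp [hab]), ind_of_not_mem (by simp)]
  rw [if_neg (by rintro ⟨h, -⟩; linarith), if_pos ⟨le_refl a, hab⟩,
    if_pos ⟨hab, le_refl b⟩, if_neg (by rintro ⟨-, h⟩; linarith)]
  ring

lemma tame_estep_Ioi (a : ℝ) :
    Tame (ind (Ioi a)) ∧ Estep (ind (Ioi a)) = -1 := by
  have hL : ∀ x, Tendsto (ind (Ioi a)) (𝓝[<] x) (𝓝 (if a < x then 1 else 0)) := by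
    intro x
    by_cases h1 : a < x
    · rw [if_pos h1]
      exact tendsto_ind_one (eventually_of_mem
        (Ioo_mem_nhdsLT_of_mem (⟨h1, le_refl x⟩ : x ∈ Ioc a x)) (fun y hy => hy.1))
    · rw [if_neg h1]
      push_neg at h1
      exact tendsto_ind_zero (eventually_of_mem self_mem_nhdsWithin
        (fun y (hy : y ∈ Iio x) hm => absurd hm
          (by simp only [Set.mem_Iio] at hy; simp only [Set.mem_Ioi]; push_neg; linarith)))
  have hR : ∀ x, Tendsto (ind (Ioi a)) (𝓝[>] x) (𝓝 (if a ≤ x then 1 else 0)) := by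
    intro x
    by_cases h1 : a ≤ x
    · rw [if_pos h1]
      exact tendsto_ind_one (eventually_of_mem self_mem_nhdsWithin
        (fun y (hy : y ∈ Ioi x) => by simp only [Set.mem_Ioi] at hy ⊢; linarith))
    · rw [if_neg h1]
      push_neg at h1
      exact tendsto_ind_zero (eventually_of_mem
        (Ioo_mem_nhdsGT_of_mem (⟨le_refl x, h1⟩ : x ∈ Ico x a))
        (fun y hy hm => absurd hm (by simp only [Set.mem_Ioi]; push_neg; exact hy.2.le)))
  have hB : Tendsto (ind (Ioi a)) atBot (𝓝 0) :=
    tendsto_ind_zero (eventually_of_mem (Iio_mem_atBot a)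
      (fun y hy hm => absurd hm (by simp only [Set.mem_Ioi]; push_neg; exact (le_of_lt hy))))
  have hT : Tendsto (ind (Ioi a)) atTop (𝓝 1) :=
    tendsto_ind_one (eventually_of_mem (Ioi_mem_atTop a) (fun y hy => hy))
  obtain ⟨ht, he⟩ := tame_estep_of (ind (Ioi a)) _ _ 0 1 {a} hL hR hB hT (by
    intro x hx
    simp only [Finset.mem_singleton] at hx
    by_cases hm : x ∈ Ioi a
    · rw [ind_of_mem hm, if_pos (show a < x from hm), if_pos (le_of_lt (show a < x from hm))]; ring
    · simp only [Set.mem_Ioi, not_lt] at hm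
      have hxa : x < a := lt_of_le_of_ne hm hx
      rw [ind_of_not_mem (by simp only [Set.mem_Ioi]; push_neg; exact hm),
        if_neg (by linarith), if_neg (by linarith)]; ring)
  refine ⟨ht, ?_⟩
  rw [he, Finset.sum_singleton, ind_of_not_mem (by simp), if_neg (lt_irrefl a),
    if_pos (le_refl a)]
  ring

lemma tame_estep_Iio (b : ℝ) :
    Tame (ind (Iio b)) ∧ Estep (ind (Iio b)) = -1 := by
  have hL : ∀ x, Tendsto (ind (Iio b)) (𝓝[<] x) (𝓝 (if x ≤ b then 1 else 0)) := by
    intro x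
    by_cases h1 : x ≤ b
    · rw [if_pos h1]
      exact tendsto_ind_one (eventually_of_mem self_mem_nhdsWithin
        (fun y (hy : y ∈ Iio x) => by simp only [Set.mem_Iio] at hy ⊢; linarith))
    · rw [if_neg h1]
      push_neg at h1
      exact tendsto_ind_zero (eventually_of_mem
        (Ioo_mem_nhdsLT_of_mem (⟨h1, le_refl x⟩ : x ∈ Ioc b x))
        (fun y hy hm => absurd hm (by simp only [Set.mem_Iio]; push_neg; exact hy.1.le)))
  have hR : ∀ x, Tendsto (ind (Iio b)) (𝓝[>] x) (𝓝 (if x < b then 1 else 0)) := by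
    intro x
    by_cases h1 : x < b
    · rw [if_pos h1]
      exact tendsto_ind_one (eventually_of_mem
        (Ioo_mem_nhdsGT_of_mem (⟨le_refl x, h1⟩ : x ∈ Ico x b)) (fun y hy => hy.2))
    · rw [if_neg h1]
      push_neg at h1
      exact tendsto_ind_zero (eventually_of_mem self_mem_nhdsWithin
        (fun y (hy : y ∈ Ioi x) hm => absurd hm
          (by simp only [Set.mem_Ioi] at hy; simp only [Set.mem_Iio]; push_neg; linarith)))
  have hB : Tendsto (ind (Iio b)) atBot (𝓝 1) :=
    tendsto_ind_one (eventually_of_mem (Iio_mem_atBot b) (fun y hy => hy))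
  have hT : Tendsto (ind (Iio b)) atTop (𝓝 0) :=
    tendsto_ind_zero (eventually_of_mem (Ioi_mem_atTop b)
      (fun y hy hm => absurd hm (by simp only [Set.mem_Iio]; push_neg; exact (le_of_lt hy))))
  obtain ⟨ht, he⟩ := tame_estep_of (ind (Iio b)) _ _ 1 0 {b} hL hR hB hT (by
    intro x hx
    simp only [Finset.mem_singleton] at hx
    by_cases hm : x ∈ Iio b
    · rw [ind_of_mem hm, if_pos (le_of_lt (show x < b from hm)), if_pos (show x < b from hm)]; ring
    · simp only [Set.mem_Iio, not_lt] at hm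
      have hxb : b < x := lt_of_le_of_ne hm (Ne.symm hx)
      rw [ind_of_not_mem (by simp only [Set.mem_Iio]; push_neg; exact hm),
        if_neg (by linarith), if_neg (by linarith)]; ring)
  refine ⟨ht, ?_⟩
  rw [he, Finset.sum_singleton, ind_of_not_mem (by simp), if_pos (le_refl b),
    if_neg (lt_irrefl b)]
  ring

lemma tame_estep_univ :
    Tame (ind (univ : Set ℝ)) ∧ Estep (ind (univ : Set ℝ)) = -1 := by
  have h1 : ∀ l : Filter ℝ, Tendsto (ind (univ : Set ℝ)) l (𝓝 1) := fun l =>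
    tendsto_ind_one (Eventually.of_forall (fun y => mem_univ y))
  obtain ⟨ht, he⟩ := tame_estep_of (ind (univ : Set ℝ)) (fun _ => 1) (fun _ => 1) 1 1 ∅
    (fun x => h1 _) (fun x => h1 _) (h1 _) (h1 _) (by
      intro x _
      rw [ind_of_mem (mem_univ x)]; ring)
  refine ⟨ht, ?_⟩
  rw [he, Finset.sum_empty]; ring

lemma tame_estep_singleton (c : ℝ) :
    Tame (ind ({c} : Set ℝ)) ∧ Estep (ind ({c} : Set ℝ)) = 1 := by
  have hL : ∀ x, Tendsto (ind ({c} : Set ℝ)) (𝓝[<] x) (𝓝 0) := by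
    intro x
    rcases le_or_gt x c with h1 | h1
    · exact tendsto_ind_zero (eventually_of_mem self_mem_nhdsWithin
        (fun y (hy : y ∈ Iio x) hm => by
          simp only [Set.mem_Iio] at hy; simp only [Set.mem_singleton_iff] at hm; linarith))
    · exact tendsto_ind_zero (eventually_of_mem
        (Ioo_mem_nhdsLT_of_mem (⟨h1, le_refl x⟩ : x ∈ Ioc c x))
        (fun y hy hm => by
          simp only [Set.mem_singleton_iff] at hm; subst hm; exact absurd hy.1 (lt_irrefl _)))
  have hR : ∀ x, Tendsto (ind ({c} : Set ℝ)) (𝓝[>] x) (𝓝 0) := by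
    intro x
    rcases lt_or_ge x c with h1 | h1
    · exact tendsto_ind_zero (eventually_of_mem
        (Ioo_mem_nhdsGT_of_mem (⟨le_refl x, h1⟩ : x ∈ Ico x c))
        (fun y hy hm => by
          simp only [Set.mem_singleton_iff] at hm; subst hm; exact absurd hy.2 (lt_irrefl _)))
    · exact tendsto_ind_zero (eventually_of_mem self_mem_nhdsWithin
        (fun y (hy : y ∈ Ioi x) hm => by
          simp only [Set.mem_Ioi] at hy; simp only [Set.mem_singleton_iff] at hm; linarith))
  have hB : Tendsto (ind ({c} : Set ℝ)) atBot (𝓝 0) :=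
    tendsto_ind_zero (eventually_of_mem (Iio_mem_atBot c)
      (fun y hy hm => by
        simp only [Set.mem_singleton_iff] at hm; subst hm; exact absurd (show y < y from hy) (lt_irrefl _)))
  have hT : Tendsto (ind ({c} : Set ℝ)) atTop (𝓝 0) :=
    tendsto_ind_zero (eventually_of_mem (Ioi_mem_atTop c)
      (fun y hy hm => by
        simp only [Set.mem_singleton_iff] at hm; subst hm; exact absurd (show y < y from hy) (lt_irrefl _)))
  obtain ⟨ht, he⟩ := tame_estep_of (ind ({c} : Set ℝ)) (fun _ => 0) (fun _ => 0) 0 0 {c}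
    hL hR hB hT (by
      intro x hx
      simp only [Finset.mem_singleton] at hx
      rw [ind_of_not_mem (by simpa using hx)]; ring)
  refine ⟨ht, ?_⟩
  rw [he, Finset.sum_singleton, ind_of_mem (mem_singleton c)]
  ring

section ConvexGeom

variable {E F : Type*} [NormedAddCommGroup E] [NormedSpace ℝ E]
  [NormedAddCommGroup F] [NormedSpace ℝ F]

lemma affine_comb_eq (f : E →ᵃ[ℝ] F) (x y : E) (t : ℝ) :
    f (y + t • (x - y)) = f y + t • (f x - f y) := by
  have h1 : y + t • (x - y) = t • (x -ᵥ y) +ᵥ y := by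
    simp [vsub_eq_sub, vadd_eq_add]; abel
  rw [h1, AffineMap.map_vadd, LinearMap.map_smul, AffineMap.linearMap_vsub]
  simp [vsub_eq_sub, vadd_eq_add]; abel

lemma relint_smallvec {K : Set E} {x v : E}
    (hx : x ∈ intrinsicInterior ℝ K) (hv : v ∈ vectorSpan ℝ K) :
    ∃ ε : ℝ, 0 < ε ∧ x + ε • v ∈ K := by
  obtain ⟨y, hy, rfl⟩ := hx
  obtain ⟨δ, δpos, hδ⟩ := Metric.mem_nhds_iff.1 (mem_interior_iff_mem_nhds.1 hy)
  set ε := δ / (‖v‖ + 1) with hεdef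
  have hε : 0 < ε := div_pos δpos (by positivity)
  have hmem : (↑y : E) + ε • v ∈ affineSpan ℝ K := by
    have h2 : (ε • v) +ᵥ (↑y : E) ∈ affineSpan ℝ K :=
      AffineSubspace.vadd_mem_of_mem_direction
        (by rw [direction_affineSpan]; exact Submodule.smul_mem _ _ hv) y.2
    simpa [vadd_eq_add, add_comm] using h2
  refine ⟨ε, hε, ?_⟩
  have hball : (⟨_, hmem⟩ : affineSpan ℝ K) ∈ Metric.ball y δ := by
    rw [Metric.mem_ball, Subtype.dist_eq]
    have h3 : dist ((↑y : E) + ε • v) (↑y : E) = ‖ε • v‖ := by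
      rw [dist_eq_norm]; congr 1; abel
    rw [h3, norm_smul, Real.norm_eq_abs, abs_of_pos hε]
    calc ε * ‖v‖ < ε * (‖v‖ + 1) := by
          exact mul_lt_mul_of_pos_left (lt_add_one _) hε
      _ = δ := by rw [hεdef]; field_simp
  exact hδ hball

lemma relint_segment {K : Set E} (hK : Convex ℝ K) {x y : E}
    (hx : x ∈ intrinsicInterior ℝ K) (hy : y ∈ K) {t : ℝ} (ht0 : 0 < t) (ht1 : t < 1) :
    x + t • (y - x) ∈ intrinsicInterior ℝ K := by
  obtain ⟨x', hx', hxe⟩ := hx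
  subst hxe
  obtain ⟨δ, δpos, hδ⟩ := Metric.mem_nhds_iff.1 (mem_interior_iff_mem_nhds.1 hx')
  have hyS : y ∈ affineSpan ℝ K := subset_affineSpan ℝ K hy
  have hzS : (↑x' : E) + t • (y - ↑x') ∈ affineSpan ℝ K := by
    have := AffineSubspace.smul_vsub_vadd_mem (affineSpan ℝ K) t hyS x'.2 x'.2
    simpa [vsub_eq_sub, vadd_eq_add, add_comm] using this
  refine ⟨⟨_, hzS⟩, ?_, rfl⟩
  rw [mem_interior_iff_mem_nhds, Metric.mem_nhds_iff]
  refine ⟨(1 - t) * δ, by nlinarith, ?_⟩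
  intro w' hw'
  rw [Metric.mem_ball, Subtype.dist_eq] at hw'
  set w : E := ↑w' with hwdef
  set z : E := (↑x' : E) + t • (y - ↑x') with hzdef
  set xt : E := (↑x' : E) + (1 - t)⁻¹ • (w - z) with hxtdef
  have hxtS : xt ∈ affineSpan ℝ K := by
    have := AffineSubspace.smul_vsub_vadd_mem (affineSpan ℝ K) (1 - t)⁻¹ w'.2 hzS x'.2
    simpa [vsub_eq_sub, vadd_eq_add, add_comm, hxtdef] using this
  have hdist : dist (⟨xt, hxtS⟩ : affineSpan ℝ K) x' < δ := by
    rw [Subtype.dist_eq]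
    have h4 : dist xt (↑x' : E) = (1 - t)⁻¹ * ‖w - z‖ := by
      rw [hxtdef, dist_eq_norm]
      have : (↑x' : E) + (1 - t)⁻¹ • (w - z) - ↑x' = (1 - t)⁻¹ • (w - z) := by abel
      rw [this, norm_smul, Real.norm_eq_abs, abs_of_pos (inv_pos.2 (by linarith))]
    rw [h4]
    have h5 : ‖w - z‖ < (1 - t) * δ := by rw [← dist_eq_norm]; exact hw'
    rw [inv_mul_lt_iff₀ (by linarith)]
    linarith [h5]
  have hxtK : xt ∈ K := hδ hdist
  have hwc : w = (1 - t) • xt + t • y := by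
    rw [hxtdef, hzdef, smul_add, smul_smul,
      mul_inv_cancel₀ (by linarith : (1:ℝ) - t ≠ 0)]
    module
  have : w ∈ K := by
    rw [hwc]
    exact hK hxtK hy (by linarith) (by linarith) (by ring)
  exact this

end ConvexGeom

section ConvexGeom2

variable {E F : Type*} [NormedAddCommGroup E] [NormedSpace ℝ E] [FiniteDimensional ℝ E]
  [NormedAddCommGroup F] [NormedSpace ℝ F] [FiniteDimensional ℝ F]

lemma relint_extend {K : Set E} {x y : E}
    (hx : x ∈ intrinsicInterior ℝ K) (hy : y ∈ K) :
    ∃ μ : ℝ, 1 < μ ∧ y + μ • (x - y) ∈ K := by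
  have hxK : x ∈ K := intrinsicInterior_subset hx
  have hv : x - y ∈ vectorSpan ℝ K := by
    have := vsub_mem_vectorSpan ℝ hxK hy
    simpa [vsub_eq_sub] using this
  obtain ⟨ε, hε, hεK⟩ := relint_smallvec hx hv
  refine ⟨1 + ε, by linarith, ?_⟩
  have : y + (1 + ε) • (x - y) = x + ε • (x - y) := by module
  rw [this]
  exact hεK

lemma mem_relint_of_extension {K : Set E} {x : E} (hK : Convex ℝ K)
    (hx : x ∈ K)
    (h : ∀ y ∈ K, ∃ μ : ℝ, 1 < μ ∧ y + μ • (x - y) ∈ K) :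
    x ∈ intrinsicInterior ℝ K := by
  obtain ⟨z, hz⟩ := Set.Nonempty.intrinsicInterior hK ⟨x, hx⟩
  obtain ⟨μ, hμ, hw⟩ := h z (intrinsicInterior_subset hz)
  set w : E := z + μ • (x - z) with hwdef
  have hx' : x = z + μ⁻¹ • (w - z) := by
    rw [hwdef]
    have : z + μ • (x - z) - z = μ • (x - z) := by abel
    rw [this, smul_smul, inv_mul_cancel₀ (by linarith : μ ≠ 0), one_smul]
    abel
  rw [hx']
  exact relint_segment hK hz hw (inv_pos.2 (by linarith)) (inv_lt_one_of_one_lt₀ hμ)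

lemma relint_inter_affine {K A : Set E} (hK : Convex ℝ K)
    (hA : ∀ x ∈ A, ∀ y ∈ A, ∀ t : ℝ, x + t • (y - x) ∈ A)
    (hne : (intrinsicInterior ℝ K ∩ A).Nonempty) :
    intrinsicInterior ℝ (K ∩ A) = intrinsicInterior ℝ K ∩ A := by
  have hAconv : Convex ℝ A := by
    intro x hx y hy a b ha hb hab
    have h1 : a • x + b • y = x + b • (y - x) := by
      have : a = 1 - b := by linarith
      rw [this]; module
    rw [h1]
    exact hA x hx y hy b
  have hKA : Convex ℝ (K ∩ A) := hK.inter hAconv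
  obtain ⟨p, hpK, hpA⟩ := hne
  apply Set.Subset.antisymm
  · -- ⊆
    intro x hx
    have hxKA : x ∈ K ∩ A := intrinsicInterior_subset hx
    refine ⟨?_, hxKA.2⟩
    obtain ⟨μ, hμ, hz⟩ := relint_extend hx ⟨intrinsicInterior_subset hpK, hpA⟩
    set z := p + μ • (x - p) with hzdef
    have hx' : x = p + μ⁻¹ • (z - p) := by
      rw [hzdef]
      have : p + μ • (x - p) - p = μ • (x - p) := by abel
      rw [this, smul_smul, inv_mul_cancel₀ (by linarith : μ ≠ 0), one_smul]
      abel
    rw [hx']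
    exact relint_segment hK hpK hz.1 (inv_pos.2 (by linarith)) (inv_lt_one_of_one_lt₀ hμ)
  · -- ⊇
    rintro x ⟨hxK, hxA⟩
    apply mem_relint_of_extension hKA ⟨intrinsicInterior_subset hxK, hxA⟩
    rintro y ⟨hyK, hyA⟩
    obtain ⟨μ, hμ, hz⟩ := relint_extend hxK hyK
    exact ⟨μ, hμ, hz, hA y hyA x hxA μ⟩

lemma relint_image (f : E →ᵃ[ℝ] F) {K : Set E} (hK : Convex ℝ K) :
    intrinsicInterior ℝ (f '' K) = f '' intrinsicInterior ℝ K := by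
  rcases K.eq_empty_or_nonempty with rfl | hne
  · simp
  have hfK : Convex ℝ (f '' K) := hK.affine_image f
  apply Set.Subset.antisymm
  · intro x' hx'
    obtain ⟨z, hz⟩ := Set.Nonempty.intrinsicInterior hK hne
    have hzK : z ∈ K := intrinsicInterior_subset hz
    obtain ⟨μ, hμ, hw'⟩ := relint_extend hx' (Set.mem_image_of_mem f hzK)
    obtain ⟨w, hwK, hwe⟩ := hw'
    refine ⟨z + μ⁻¹ • (w - z), ?_, ?_⟩
    · exact relint_segment hK hz hwK (inv_pos.2 (by linarith)) (inv_lt_one_of_one_lt₀ hμ)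
    · rw [affine_comb_eq f w z μ⁻¹]
      rw [hwe]
      have hx'K : x' ∈ f '' K := intrinsicInterior_subset hx'
      have : f z + μ • (x' - f z) - f z = μ • (x' - f z) := by abel
      rw [this, smul_smul, inv_mul_cancel₀ (by linarith : μ ≠ 0), one_smul]
      abel
  · rintro _ ⟨x, hx, rfl⟩
    apply mem_relint_of_extension hfK (Set.mem_image_of_mem f (intrinsicInterior_subset hx))
    rintro _ ⟨y, hy, rfl⟩
    obtain ⟨μ, hμ, hp⟩ := relint_extend hx hy
    refine ⟨μ, hμ, ?_⟩
    rw [← affine_comb_eq f x y μ]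
    exact Set.mem_image_of_mem f hp

end ConvexGeom2

section DimLemmas

variable {E F : Type*} [NormedAddCommGroup E] [NormedSpace ℝ E] [FiniteDimensional ℝ E]
  [NormedAddCommGroup F] [NormedSpace ℝ F] [FiniteDimensional ℝ F]

lemma vectorSpan_image (f : E →ᵃ[ℝ] F) (K : Set E) :
    vectorSpan ℝ (f '' K) = (vectorSpan ℝ K).map f.linear := by
  rw [vectorSpan_def, vectorSpan_def, ← Submodule.span_image]
  congr 1
  ext v
  constructor
  · rintro ⟨u, hu, w, hw, rfl⟩
    obtain ⟨a, ha, rfl⟩ := hu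
    obtain ⟨b, hb, rfl⟩ := hw
    exact ⟨a -ᵥ b, Set.vsub_mem_vsub ha hb, (AffineMap.linearMap_vsub f a b)⟩
  · rintro ⟨u, hu, rfl⟩
    obtain ⟨a, ha, b, hb, rfl⟩ := hu
    exact ⟨f a, Set.mem_image_of_mem f ha, f b, Set.mem_image_of_mem f hb,
      (AffineMap.linearMap_vsub f a b).symm⟩

lemma finrank_vectorSpan_image (f : E →ᵃ[ℝ] F) (hinj : Function.Injective f.linear)
    (K : Set E) :
    Module.finrank ℝ (vectorSpan ℝ (f '' K)) = Module.finrank ℝ (vectorSpan ℝ K) := by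
  rw [vectorSpan_image]
  exact (Submodule.equivMapOfInjective f.linear hinj (vectorSpan ℝ K)).symm.finrank_eq

lemma submodule_real_eq_top {W : Submodule ℝ ℝ} {w : ℝ} (hw : w ∈ W) (h0 : w ≠ 0) :
    W = ⊤ := by
  rw [Submodule.eq_top_iff']
  intro r
  have : r = (r * w⁻¹) • w := by rw [smul_eq_mul, mul_assoc, inv_mul_cancel₀ h0, mul_one]
  rw [this]
  exact W.smul_mem _ hw

lemma finrank_inf_ker {n : ℕ} (V : Submodule ℝ (Fin (n + 1) → ℝ)) {v : Fin (n + 1) → ℝ}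
    (hv : v ∈ V) (h0 : v 0 ≠ 0) :
    Module.finrank ℝ ↥(V ⊓ LinearMap.ker (LinearMap.proj (R := ℝ)
      (φ := fun _ : Fin (n + 1) => ℝ) 0)) + 1 = Module.finrank ℝ V := by
  set π₀ := LinearMap.proj (R := ℝ) (φ := fun _ : Fin (n + 1) => ℝ) 0
  set ψ := π₀.comp V.subtype
  have hrn := LinearMap.finrank_range_add_finrank_ker ψ
  have hrange : LinearMap.range ψ = ⊤ := by
    apply submodule_real_eq_top (w := v 0) _ h0
    exact ⟨⟨v, hv⟩, rfl⟩
  have h1 : Module.finrank ℝ (LinearMap.range ψ) = 1 := by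
    rw [hrange]
    simpa using finrank_top ℝ ℝ
  have hker : LinearMap.ker ψ = Submodule.comap V.subtype (V ⊓ LinearMap.ker π₀) := by
    rw [Submodule.comap_inf, Submodule.comap_subtype_self, top_inf_eq]
    rfl
  have h2 : Module.finrank ℝ (LinearMap.ker ψ) =
      Module.finrank ℝ ↥(V ⊓ LinearMap.ker π₀) := by
    rw [hker]
    exact (Submodule.comapSubtypeEquivOfLe inf_le_left).finrank_eq
  omega

lemma relint_eq_interior_of_affineSpan_top {K : Set E} (h : affineSpan ℝ K = ⊤) :
    intrinsicInterior ℝ K = interior K := by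
  apply Set.Subset.antisymm
  · rintro _ ⟨y, hy, rfl⟩
    obtain ⟨δ, δpos, hδ⟩ := Metric.mem_nhds_iff.1 (mem_interior_iff_mem_nhds.1 hy)
    rw [mem_interior_iff_mem_nhds, Metric.mem_nhds_iff]
    refine ⟨δ, δpos, ?_⟩
    intro w hw
    have hwS : w ∈ affineSpan ℝ K := by rw [h]; trivial
    have : (⟨w, hwS⟩ : affineSpan ℝ K) ∈ Metric.ball y δ := by
      rw [Metric.mem_ball, Subtype.dist_eq]
      exact hw
    exact hδ this
  · exact interior_subset_intrinsicInterior

lemma affineSpan_top_of_two {I : Set ℝ} {p q : ℝ} (hp : p ∈ I) (hq : q ∈ I) (hne : p ≠ q) :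
    affineSpan ℝ I = ⊤ := by
  refine le_antisymm le_top ?_
  intro r _
  have hqp : q - p ≠ 0 := sub_ne_zero.2 (Ne.symm hne)
  have h1 : ((r - p) / (q - p)) • (q -ᵥ p) +ᵥ p ∈ affineSpan ℝ I :=
    AffineSubspace.smul_vsub_vadd_mem _ _ (subset_affineSpan ℝ I hq)
      (subset_affineSpan ℝ I hp) (subset_affineSpan ℝ I hp)
  have h2 : ((r - p) / (q - p)) • (q -ᵥ p) +ᵥ p = r := by
    simp only [vsub_eq_sub, vadd_eq_add, smul_eq_mul]
    field_simp
    ring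
  rwa [h2] at h1

lemma isOpen_no_min {O : Set ℝ} (hO : IsOpen O) {m : ℝ} (hm : m ∈ O)
    (hmin : ∀ y ∈ O, m ≤ y) : False := by
  obtain ⟨ε, εpos, hε⟩ := Metric.isOpen_iff.1 hO m hm
  have h1 : m - ε / 2 ∈ O := by
    apply hε
    rw [Metric.mem_ball, Real.dist_eq]
    rw [abs_of_nonpos (by linarith)]
    linarith
  linarith [hmin _ h1]

lemma isOpen_no_max {O : Set ℝ} (hO : IsOpen O) {m : ℝ} (hm : m ∈ O)
    (hmax : ∀ y ∈ O, y ≤ m) : False := by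
  obtain ⟨ε, εpos, hε⟩ := Metric.isOpen_iff.1 hO m hm
  have h1 : m + ε / 2 ∈ O := by
    apply hε
    rw [Metric.mem_ball, Real.dist_eq]
    rw [abs_of_nonneg (by linarith)]
    linarith
  linarith [hmax _ h1]

lemma open_convex_cases {O : Set ℝ} (hO : IsOpen O) (hconv : Convex ℝ O) (hne : O.Nonempty) :
    (∃ a b, a < b ∧ O = Ioo a b) ∨ (∃ a, O = Ioi a) ∨ (∃ b, O = Iio b) ∨ O = univ := by
  have hpre : IsPreconnected O := hconv.isPreconnected
  rcases hpre.mem_intervals with h|h|h|h|h|h|h|h|h|h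
  · exfalso
    have hle : sInf O ≤ sSup O := by
      rw [h] at hne; exact (Set.nonempty_Icc.1 hne)
    exact isOpen_no_min hO (by rw [h]; exact ⟨le_refl _, hle⟩)
      (fun y hy => by rw [h] at hy; exact hy.1)
  · exfalso
    have hlt : sInf O < sSup O := by
      rw [h] at hne; exact (Set.nonempty_Ico.1 hne)
    exact isOpen_no_min hO (by rw [h]; exact ⟨le_refl _, hlt⟩)
      (fun y hy => by rw [h] at hy; exact hy.1)
  · exfalso
    have hlt : sInf O < sSup O := by
      rw [h] at hne; exact (Set.nonempty_Ioc.1 hne)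
    exact isOpen_no_max hO (by rw [h]; exact ⟨hlt, le_refl _⟩)
      (fun y hy => by rw [h] at hy; exact hy.2)
  · left
    refine ⟨_, _, ?_, h⟩
    rw [h] at hne; exact Set.nonempty_Ioo.1 hne
  · exfalso
    exact isOpen_no_min hO (by rw [h]; exact Set.self_mem_Ici)
      (fun y hy => by rw [h] at hy; exact Set.mem_Ici.1 hy)
  · right; left; exact ⟨_, h⟩
  · exfalso
    exact isOpen_no_max hO (by rw [h]; exact Set.self_mem_Iic)
      (fun y hy => by rw [h] at hy; exact Set.mem_Iic.1 hy)
  · right; right; left; exact ⟨_, h⟩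
  · right; right; right; exact h
  · exfalso; rw [h] at hne; exact Set.not_nonempty_empty hne

lemma tame_estep_relint_wide {I : Set ℝ} (hconv : Convex ℝ I) {p q : ℝ}
    (hp : p ∈ I) (hq : q ∈ I) (hne : p ≠ q) :
    Tame (ind (intrinsicInterior ℝ I)) ∧ Estep (ind (intrinsicInterior ℝ I)) = -1 := by
  have hsp := affineSpan_top_of_two hp hq hne
  rw [relint_eq_interior_of_affineSpan_top hsp]
  have hO : IsOpen (interior I) := isOpen_interior
  have hc : Convex ℝ (interior I) := hconv.interior
  have hn : (interior I).Nonempty := by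
    have := Set.Nonempty.intrinsicInterior hconv ⟨p, hp⟩
    rwa [relint_eq_interior_of_affineSpan_top hsp] at this
  rcases open_convex_cases hO hc hn with ⟨a, b, hab, h⟩ | ⟨a, h⟩ | ⟨b, h⟩ | h
  · rw [h]; exact tame_estep_Ioo hab
  · rw [h]; exact tame_estep_Ioi a
  · rw [h]; exact tame_estep_Iio b
  · rw [h]; exact tame_estep_univ

end DimLemmas

section Slices

open Module

/-- The linear map `x ↦ Fin.cons 0 x`. -/
noncomputable def consLinear (n : ℕ) : (Fin n → ℝ) →ₗ[ℝ] (Fin (n + 1) → ℝ) where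
  toFun x := Fin.cons 0 x
  map_add' x y := by
    funext i
    refine Fin.cases ?_ (fun j => ?_) i <;> simp
  map_smul' c x := by
    funext i
    refine Fin.cases ?_ (fun j => ?_) i <;> simp

lemma consLinear_injective (n : ℕ) : Function.Injective (consLinear n) := by
  intro x y h
  have := congrArg Fin.tail h
  simpa [Fin.tail_cons, consLinear] using this

/-- The affine map `x ↦ Fin.cons c x`. -/
noncomputable def consAffine (n : ℕ) (c : ℝ) : (Fin n → ℝ) →ᵃ[ℝ] (Fin (n + 1) → ℝ) where
  toFun x := Fin.cons c x
  linear := consLinear n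
  map_vadd' p v := by
    funext i
    refine Fin.cases ?_ (fun j => ?_) i <;>
      simp [consLinear, vadd_eq_add, Fin.cons_zero, Fin.cons_succ]

@[simp] lemma consAffine_apply (n : ℕ) (c : ℝ) (x : Fin n → ℝ) :
    consAffine n c x = Fin.cons c x := rfl

/-- The affine projection to the 0-th coordinate. -/
noncomputable def projAffine (n : ℕ) : (Fin (n + 1) → ℝ) →ᵃ[ℝ] ℝ :=
  (LinearMap.proj (R := ℝ) (φ := fun _ : Fin (n + 1) => ℝ) 0).toAffineMap

@[simp] lemma projAffine_apply (n : ℕ) (y : Fin (n + 1) → ℝ) : projAffine n y = y 0 := rfl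

lemma vectorSpan_slice {n : ℕ} {K : Set (Fin (n + 1) → ℝ)} {c : ℝ} {x₀ : Fin (n + 1) → ℝ}
    (hx₀ : x₀ ∈ intrinsicInterior ℝ K) (hc : x₀ 0 = c) :
    vectorSpan ℝ (K ∩ {y | y 0 = c}) =
      vectorSpan ℝ K ⊓ LinearMap.ker (LinearMap.proj (R := ℝ)
        (φ := fun _ : Fin (n + 1) => ℝ) 0) := by
  apply le_antisymm
  · rw [vectorSpan_def]
    apply Submodule.span_le.2
    rintro v ⟨u, hu, w, hw, rfl⟩
    constructor
    · exact vsub_mem_vectorSpan ℝ hu.1 hw.1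
    · show ((fun x1 x2 => x1 -ᵥ x2) u w) ∈ LinearMap.ker (LinearMap.proj (R := ℝ)
        (φ := fun _ : Fin (n + 1) => ℝ) 0)
      rw [LinearMap.mem_ker]
      show (u -ᵥ w) 0 = 0
      have h5 : (u -ᵥ w) 0 = u 0 - w 0 := rfl
      rw [h5, hu.2, hw.2, sub_self]
  · rintro v ⟨hvV, hvker⟩
    obtain ⟨ε, hε, hεK⟩ := relint_smallvec hx₀ hvV
    have hv0 : v 0 = 0 := hvker
    have h1 : x₀ + ε • v ∈ K ∩ {y | y 0 = c} := by
      refine ⟨hεK, ?_⟩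
      show (x₀ + ε • v) 0 = c
      have : (x₀ + ε • v) 0 = x₀ 0 + ε * v 0 := rfl
      rw [this, hv0, mul_zero, add_zero, hc]
    have h2 : x₀ ∈ K ∩ {y | y 0 = c} := ⟨intrinsicInterior_subset hx₀, hc⟩
    have h3 : (x₀ + ε • v) -ᵥ x₀ ∈ vectorSpan ℝ (K ∩ {y | y 0 = c}) :=
      vsub_mem_vectorSpan ℝ h1 h2
    have h4 : (x₀ + ε • v) -ᵥ x₀ = ε • v := by
      rw [vsub_eq_sub]; abel
    rw [h4] at h3
    have := Submodule.smul_mem _ ε⁻¹ h3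
    rwa [smul_smul, inv_mul_cancel₀ (ne_of_gt hε), one_smul] at this

end Slices

section SlicePackage

open Module

lemma ind_congr {α β : Type*} {S : Set α} {T : Set β} {x : α} {y : β}
    (h : x ∈ S ↔ y ∈ T) : ind S x = ind T y := by
  unfold ind
  exact if_congr h rfl rfl

lemma slice_package {n : ℕ} {K : Set (Fin (n + 1) → ℝ)} (hK : Convex ℝ K) {c : ℝ}
    (hc : c ∈ intrinsicInterior ℝ (projAffine n '' K)) :
    (∀ x : Fin n → ℝ, (x ∈ intrinsicInterior ℝ (consAffine n c ⁻¹' K) ↔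
        Fin.cons c x ∈ intrinsicInterior ℝ K))
    ∧ (consAffine n c ⁻¹' K).Nonempty
    ∧ ((-1 : ℝ) ^ (Module.finrank ℝ (vectorSpan ℝ (consAffine n c ⁻¹' K))) =
        if ∃ y₁ ∈ K, ∃ y₂ ∈ K, y₁ 0 ≠ y₂ 0
        then -(-1 : ℝ) ^ (Module.finrank ℝ (vectorSpan ℝ K))
        else (-1 : ℝ) ^ (Module.finrank ℝ (vectorSpan ℝ K))) := by
  have hrel : intrinsicInterior ℝ (projAffine n '' K) =
      projAffine n '' intrinsicInterior ℝ K := relint_image _ hK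
  rw [hrel] at hc
  obtain ⟨p, hpr, hpc⟩ := hc
  have hpc' : p 0 = c := hpc
  set H : Set (Fin (n + 1) → ℝ) := {y | y 0 = c} with hHdef
  have hH : ∀ x ∈ H, ∀ y ∈ H, ∀ t : ℝ, x + t • (y - x) ∈ H := by
    intro x hx y hy t
    show (x + t • (y - x)) 0 = c
    have : (x + t • (y - x)) 0 = x 0 + t * (y 0 - x 0) := rfl
    rw [this, hx, hy]
    simp
  have hinter : intrinsicInterior ℝ (K ∩ H) = intrinsicInterior ℝ K ∩ H :=
    relint_inter_affine hK hH ⟨p, hpr, hpc'⟩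
  have hsliceconv : Convex ℝ (consAffine n c ⁻¹' K) := hK.affine_preimage _
  have himg : consAffine n c '' (consAffine n c ⁻¹' K) = K ∩ H := by
    ext y
    constructor
    · rintro ⟨x, hx, rfl⟩
      exact ⟨hx, show (Fin.cons c x : Fin (n+1) → ℝ) 0 = c by simp⟩
    · rintro ⟨hyK, hy0⟩
      refine ⟨Fin.tail y, ?_, ?_⟩
      · show Fin.cons c (Fin.tail y) ∈ K
        rw [show c = y 0 from hy0.symm, Fin.cons_self_tail]
        exact hyK
      · show Fin.cons c (Fin.tail y) = y
        rw [show c = y 0 from hy0.symm, Fin.cons_self_tail]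
  have hrel2 : intrinsicInterior ℝ (K ∩ H) =
      consAffine n c '' intrinsicInterior ℝ (consAffine n c ⁻¹' K) := by
    rw [← himg, relint_image _ hsliceconv]
  refine ⟨?_, ?_, ?_⟩
  · intro x
    constructor
    · intro hx
      have : Fin.cons c x ∈ consAffine n c '' intrinsicInterior ℝ (consAffine n c ⁻¹' K) :=
        ⟨x, hx, rfl⟩
      rw [← hrel2, hinter] at this
      exact this.1
    · intro hx
      have h1 : Fin.cons c x ∈ intrinsicInterior ℝ K ∩ H := ⟨hx, show (Fin.cons c x : Fin (n+1) → ℝ) 0 = c by simp⟩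
      rw [← hinter, hrel2] at h1
      obtain ⟨x', hx', he⟩ := h1
      have : x' = x := by
        have := congrArg Fin.tail he
        simpa [Fin.tail_cons] using this
      rwa [← this]
  · refine ⟨Fin.tail p, ?_⟩
    show Fin.cons c (Fin.tail p) ∈ K
    rw [show c = p 0 from hpc'.symm, Fin.cons_self_tail]
    exact intrinsicInterior_subset hpr
  · have hd1 : Module.finrank ℝ (vectorSpan ℝ (consAffine n c ⁻¹' K)) =
        Module.finrank ℝ (vectorSpan ℝ (K ∩ H)) := by
      rw [← himg]
      exact (finrank_vectorSpan_image (consAffine n c) (consLinear_injective n) _).symm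
    by_cases hwide : ∃ y₁ ∈ K, ∃ y₂ ∈ K, y₁ 0 ≠ y₂ 0
    · rw [if_pos hwide]
      obtain ⟨y₁, hy₁, y₂, hy₂, hne⟩ := hwide
      have hvs : vectorSpan ℝ (K ∩ H) = vectorSpan ℝ K ⊓ LinearMap.ker
          (LinearMap.proj (R := ℝ) (φ := fun _ : Fin (n + 1) => ℝ) 0) :=
        vectorSpan_slice hpr hpc'
      have hv : y₁ -ᵥ y₂ ∈ vectorSpan ℝ K := vsub_mem_vectorSpan ℝ hy₁ hy₂
      have hv0 : (y₁ -ᵥ y₂) 0 ≠ 0 := by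
        show y₁ 0 - y₂ 0 ≠ 0
        exact sub_ne_zero.2 hne
      have hfr := finrank_inf_ker (vectorSpan ℝ K) hv hv0
      rw [hd1, hvs, ← hfr, pow_succ]
      ring
    · rw [if_neg hwide]
      push_neg at hwide
      have hKH : K ∩ H = K := by
        apply Set.inter_eq_self_of_subset_left
        intro y hy
        show y 0 = c
        rw [hwide y hy p (intrinsicInterior_subset hpr), hpc']
      rw [hd1, hKH]

end SlicePackage

section Master

open Module

/-- Iterated one-dimensional Euler integration. -/
noncomputable def Eul : (n : ℕ) → ((Fin n → ℝ) → ℝ) → ℝ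
  | 0 => fun f => f (fun i => Fin.elim0 i)
  | (n + 1) => fun f => Estep (fun c => Eul n (fun x => f (Fin.cons c x)))

lemma Eul_zero (f : (Fin 0 → ℝ) → ℝ) : Eul 0 f = f (fun i => Fin.elim0 i) := rfl

lemma Eul_succ (n : ℕ) (f : (Fin (n + 1) → ℝ) → ℝ) :
    Eul (n + 1) f = Estep (fun c => Eul n (fun x => f (Fin.cons c x))) := rfl

theorem master (n : ℕ) {ι : Type} (s : Finset ι) (K : ι → Set (Fin n → ℝ)) (a : ι → ℝ)
    (hconv : ∀ i ∈ s, Convex ℝ (K i)) (hne : ∀ i ∈ s, (K i).Nonempty) :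
    Eul n (fun x => ∑ i ∈ s, a i * ind (intrinsicInterior ℝ (K i)) x)
      = ∑ i ∈ s, a i * (-1 : ℝ) ^ (Module.finrank ℝ (vectorSpan ℝ (K i))) := by
  induction n generalizing ι with
  | zero =>
      rw [Eul_zero]
      apply Finset.sum_congr rfl
      intro i hi
      obtain ⟨w, hw⟩ := hne i hi
      have hKi : K i = {w} := by
        apply Set.eq_singleton_iff_unique_mem.2
        exact ⟨hw, fun y _ => Subsingleton.elim y w⟩
      rw [hKi, intrinsicInterior_singleton, vectorSpan_singleton,
        ind_of_mem (show (fun i => Fin.elim0 i) ∈ ({w} : Set (Fin 0 → ℝ)) from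
          Subsingleton.elim _ w ▸ rfl)]
      simp [finrank_bot]
  | succ n IH =>
      classical
      set dK : ι → ℕ := fun i => Module.finrank ℝ (vectorSpan ℝ (K i)) with hdK
      set pK : ι → Set ℝ := fun i => projAffine n '' K i with hpKdef
      set slc : ι → ℝ → Set (Fin n → ℝ) := fun i c => consAffine n c ⁻¹' (K i) with hslc
      set bcoef : ι → ℝ := fun i =>
        if ∃ y₁ ∈ K i, ∃ y₂ ∈ K i, y₁ 0 ≠ y₂ 0 then -(-1 : ℝ) ^ (dK i)
        else (-1 : ℝ) ^ (dK i) with hbco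
      have key : ∀ c : ℝ,
          Eul n (fun x => ∑ i ∈ s, a i * ind (intrinsicInterior ℝ (K i)) (Fin.cons c x))
            = ∑ i ∈ s, (a i * bcoef i) * ind (intrinsicInterior ℝ (pK i)) c := by
        intro c
        have hconv' : ∀ i ∈ s, Convex ℝ
            (if c ∈ intrinsicInterior ℝ (pK i) then slc i c else ({0} : Set (Fin n → ℝ))) := by
          intro i hi
          by_cases hci : c ∈ intrinsicInterior ℝ (pK i)
          · rw [if_pos hci]; exact (hconv i hi).affine_preimage _
          · rw [if_neg hci]; exact convex_singleton 0
        have hne' : ∀ i ∈ s,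
            (if c ∈ intrinsicInterior ℝ (pK i) then slc i c
              else ({0} : Set (Fin n → ℝ))).Nonempty := by
          intro i hi
          by_cases hci : c ∈ intrinsicInterior ℝ (pK i)
          · rw [if_pos hci]; exact (slice_package (hconv i hi) hci).2.1
          · rw [if_neg hci]; exact ⟨0, rfl⟩
        have hip := IH s
          (fun i => if c ∈ intrinsicInterior ℝ (pK i) then slc i c else {0})
          (fun i => if c ∈ intrinsicInterior ℝ (pK i) then a i else 0) hconv' hne'
        have hfe : (fun x => ∑ i ∈ s,
            (if c ∈ intrinsicInterior ℝ (pK i) then a i else 0) *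
            ind (intrinsicInterior ℝ
              (if c ∈ intrinsicInterior ℝ (pK i) then slc i c else {0})) x)
            = fun x => ∑ i ∈ s, a i * ind (intrinsicInterior ℝ (K i)) (Fin.cons c x) := by
          funext x
          apply Finset.sum_congr rfl
          intro i hi
          by_cases hci : c ∈ intrinsicInterior ℝ (pK i)
          · rw [if_pos hci, if_pos hci]
            congr 1
            exact ind_congr ((slice_package (hconv i hi) hci).1 x)
          · rw [if_neg hci, if_neg hci, zero_mul]
            have hnot : Fin.cons c x ∉ intrinsicInterior ℝ (K i) := by
              intro hmem
              apply hci
              rw [hpKdef]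
              simp only
              rw [relint_image _ (hconv i hi)]
              exact ⟨Fin.cons c x, hmem, by simp [projAffine_apply]⟩
            rw [ind_of_not_mem hnot, mul_zero]
        rw [hfe] at hip
        rw [hip]
        apply Finset.sum_congr rfl
        intro i hi
        by_cases hci : c ∈ intrinsicInterior ℝ (pK i)
        · have hite : (if c ∈ intrinsicInterior ℝ (pK i) then slc i c
              else ({0} : Set (Fin n → ℝ))) = slc i c := if_pos hci
          have hita : (if c ∈ intrinsicInterior ℝ (pK i) then a i else 0) = a i := if_pos hci
          have hfr := congrArg
            (fun S : Set (Fin n → ℝ) => Module.finrank ℝ (vectorSpan ℝ S)) hite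
          simp only [hita, ind_of_mem hci, hfr]
          have hpkg := (slice_package (hconv i hi) hci).2.2
          simp only [hslc, hbco, hdK, ← hpkg]
          ring
        · have hite : (if c ∈ intrinsicInterior ℝ (pK i) then slc i c
              else ({0} : Set (Fin n → ℝ))) = {0} := if_neg hci
          have hita : (if c ∈ intrinsicInterior ℝ (pK i) then a i else 0) = 0 := if_neg hci
          simp only [hita, ind_of_not_mem hci, zero_mul, mul_zero]
      have hEul : Eul (n + 1) (fun x => ∑ i ∈ s, a i * ind (intrinsicInterior ℝ (K i)) x)
          = Estep (fun c => ∑ i ∈ s, (a i * bcoef i) * ind (intrinsicInterior ℝ (pK i)) c) := by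
        rw [Eul_succ]
        congr 1
        funext c
        exact key c
      rw [hEul]
      have htame : ∀ i ∈ s,
          Tame (fun c => (a i * bcoef i) * ind (intrinsicInterior ℝ (pK i)) c) ∧
          Estep (fun c => (a i * bcoef i) * ind (intrinsicInterior ℝ (pK i)) c)
            = a i * (-1 : ℝ) ^ (dK i) := by
        intro i hi
        by_cases hwide : ∃ y₁ ∈ K i, ∃ y₂ ∈ K i, y₁ 0 ≠ y₂ 0
        · obtain ⟨y₁, hy₁, y₂, hy₂, hne0⟩ := hwide
          have hp₁ : y₁ 0 ∈ pK i := ⟨y₁, hy₁, rfl⟩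
          have hp₂ : y₂ 0 ∈ pK i := ⟨y₂, hy₂, rfl⟩
          obtain ⟨T, Ev⟩ := tame_estep_relint_wide ((hconv i hi).affine_image (projAffine n))
            hp₁ hp₂ hne0
          refine ⟨T.const_mul _, ?_⟩
          rw [Estep_const_mul T _, Ev, hbco]
          simp only
          rw [if_pos ⟨y₁, hy₁, y₂, hy₂, hne0⟩]
          ring
        · obtain ⟨q, hq⟩ := hne i hi
          have hsing : pK i = {q 0} := by
            apply Set.eq_singleton_iff_unique_mem.2
            push_neg at hwide
            refine ⟨⟨q, hq, rfl⟩, ?_⟩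
            rintro _ ⟨y, hy, rfl⟩
            exact hwide y hy q hq
          obtain ⟨T, Ev⟩ := tame_estep_singleton (q 0)
          rw [hsing, intrinsicInterior_singleton]
          refine ⟨T.const_mul _, ?_⟩
          rw [Estep_const_mul T _, Ev, hbco]
          simp only
          rw [if_neg hwide]
          ring
      rw [Estep_sum (fun i hi => (htame i hi).1)]
      apply Finset.sum_congr rfl
      intro i hi
      exact (htame i hi).2

end Master

section Final

lemma span_eq_vectorSpan {E : Type*} [NormedAddCommGroup E] [NormedSpace ℝ E]
    {s : Set E} (h0 : (0 : E) ∈ s) :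
    Submodule.span ℝ s = vectorSpan ℝ s := by
  rw [vectorSpan_def]
  apply le_antisymm
  · apply Submodule.span_le.2
    intro x hx
    apply Submodule.subset_span
    exact ⟨x, hx, 0, h0, by simp [vsub_eq_sub]⟩
  · apply Submodule.span_le.2
    rintro v ⟨p, hp, q, hq, rfl⟩
    exact sub_mem (Submodule.subset_span hp) (Submodule.subset_span hq)

end Final

end Stmt4

lemma IsPolyhedralCone.zero_mem {n : ℕ} {C : Set (Fin n → ℝ)} (h : IsPolyhedralCone C) :
    (0 : Fin n → ℝ) ∈ C := by
  obtain ⟨m, v, rfl⟩ := h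
  exact ⟨0, fun i => le_refl 0, by simp⟩

lemma IsPolyhedralCone.convex {n : ℕ} {C : Set (Fin n → ℝ)} (h : IsPolyhedralCone C) :
    Convex ℝ C := by
  obtain ⟨m, v, rfl⟩ := h
  rintro x ⟨cx, hcx, rfl⟩ y ⟨cy, hcy, rfl⟩ p q hp hq hpq
  refine ⟨fun i => p * cx i + q * cy i, fun i =>
    add_nonneg (mul_nonneg hp (hcx i)) (mul_nonneg hq (hcy i)), ?_⟩
  rw [Finset.smul_sum, Finset.smul_sum, ← Finset.sum_add_distrib]
  apply Finset.sum_congr rfl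
  intro i _
  rw [add_smul, smul_smul, smul_smul]

theorem stmt4' {n : ℕ} (σ : Set (Fin n → ℝ)) (hσ : IsPolyhedralCone σ)
    (hσdim : Set.finrank ℝ σ = n)
    {ι : Type} [Fintype ι] (C : ι → Set (Fin n → ℝ))
    (hC : ∀ i, IsPolyhedralCone (C i))
    (hcover : (⋃ i, C i) = σ)
    (hdisj : Pairwise fun i j =>
      Disjoint (intrinsicInterior ℝ (C i)) (intrinsicInterior ℝ (C j)))
    (hpart : (⋃ i ∈ {i | intrinsicInterior ℝ (C i) ⊆ intrinsicInterior ℝ σ},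
        intrinsicInterior ℝ (C i)) = intrinsicInterior ℝ σ) :
    ∑ i ∈ Finset.univ.filter
        (fun i => intrinsicInterior ℝ (C i) ⊆ intrinsicInterior ℝ σ),
      (-1 : ℤ) ^ (Set.finrank ℝ (C i)) = (-1 : ℤ) ^ n := by
  classical
  open Stmt4 in
  set T := Finset.univ.filter
    (fun i => intrinsicInterior ℝ (C i) ⊆ intrinsicInterior ℝ σ) with hT
  have hind : ∀ x, (1 : ℝ) * Stmt4.ind (intrinsicInterior ℝ σ) x
      = ∑ i ∈ T, (1 : ℝ) * Stmt4.ind (intrinsicInterior ℝ (C i)) x := by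
    intro x
    simp only [one_mul]
    by_cases hx : x ∈ intrinsicInterior ℝ σ
    · rw [Stmt4.ind_of_mem hx]
      have hx' : x ∈ ⋃ i ∈ {i | intrinsicInterior ℝ (C i) ⊆ intrinsicInterior ℝ σ},
          intrinsicInterior ℝ (C i) := by rw [hpart]; exact hx
      obtain ⟨i, hiS, hxi⟩ := Set.mem_iUnion₂.1 hx'
      rw [Finset.sum_eq_single i]
      · exact (Stmt4.ind_of_mem hxi).symm
      · intro j hjT hji
        apply Stmt4.ind_of_not_mem
        intro hxj
        exact Set.disjoint_left.1 (hdisj hji) hxj hxi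
      · intro hiT
        exact absurd (Finset.mem_filter.2 ⟨Finset.mem_univ i, hiS⟩) hiT
    · rw [Stmt4.ind_of_not_mem hx]
      symm
      apply Finset.sum_eq_zero
      intro j hjT
      apply Stmt4.ind_of_not_mem
      intro hxj
      exact hx ((Finset.mem_filter.1 hjT).2 hxj)
  have h1 := Stmt4.master n ({Unit.unit} : Finset Unit) (fun _ => σ) (fun _ => 1)
    (fun _ _ => hσ.convex) (fun _ _ => ⟨0, hσ.zero_mem⟩)
  have h2 := Stmt4.master n T C (fun _ => 1)
    (fun i _ => (hC i).convex) (fun i _ => ⟨0, (hC i).zero_mem⟩)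
  rw [Finset.sum_singleton] at h1
  have heq : Stmt4.Eul n (fun x => ∑ i ∈ ({Unit.unit} : Finset Unit),
      (1 : ℝ) * Stmt4.ind (intrinsicInterior ℝ σ) x)
      = Stmt4.Eul n (fun x => ∑ i ∈ T, (1 : ℝ) * Stmt4.ind (intrinsicInterior ℝ (C i)) x) := by
    congr 1
    funext x
    rw [Finset.sum_singleton]
    exact hind x
  rw [heq, h2] at h1
  -- h1 : ∑ i ∈ T, 1 * (-1)^(dim C i) = 1 * (-1)^(dim σ)
  have hσd : Module.finrank ℝ (vectorSpan ℝ σ) = n := by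
    rw [← Stmt4.span_eq_vectorSpan hσ.zero_mem]
    exact hσdim
  have hCd : ∀ i, Module.finrank ℝ (vectorSpan ℝ (C i)) = Set.finrank ℝ (C i) := by
    intro i
    rw [← Stmt4.span_eq_vectorSpan (hC i).zero_mem]
    rfl
  have hreal : ∑ i ∈ T, ((-1 : ℝ)) ^ (Set.finrank ℝ (C i)) = (-1 : ℝ) ^ n := by
    rw [hσd] at h1
    simp only [hCd, one_mul] at h1
    rw [← h1]
  have hcast : ((∑ i ∈ T, (-1 : ℤ) ^ (Set.finrank ℝ (C i)) : ℤ) : ℝ)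
      = (((-1 : ℤ) ^ n : ℤ) : ℝ) := by
    push_cast
    exact hreal
  exact_mod_cast hcast

/-- Let `σ` be an `n`-dimensional polyhedral cone in `ℝⁿ` and let `Σ'` be a
finite fan subdividing `σ`: its cones `C i` are polyhedral, their union is `σ`, and their
relative interiors are pairwise disjoint; moreover (fan subdivision) the relative interiors
of the cones of `T = {i | (C i)⁰ ⊆ σ⁰}` partition the relative interior of `σ`.  Then
`Σ_{τ ∈ T} (-1)^{dim τ} = (-1)^{dim σ} = (-1)^n`. -/
theorem stmt4 {n : ℕ} (σ : Set (Fin n → ℝ)) (hσ : IsPolyhedralCone σ)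
    (hσdim : Set.finrank ℝ σ = n)
    {ι : Type} [Fintype ι] (C : ι → Set (Fin n → ℝ))
    (hC : ∀ i, IsPolyhedralCone (C i))
    (hcover : (⋃ i, C i) = σ)
    (hdisj : Pairwise fun i j =>
      Disjoint (intrinsicInterior ℝ (C i)) (intrinsicInterior ℝ (C j)))
    (hpart : (⋃ i ∈ {i | intrinsicInterior ℝ (C i) ⊆ intrinsicInterior ℝ σ},
        intrinsicInterior ℝ (C i)) = intrinsicInterior ℝ σ) :
    ∑ i ∈ Finset.univ.filter
        (fun i => intrinsicInterior ℝ (C i) ⊆ intrinsicInterior ℝ σ),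
      (-1 : ℤ) ^ (Set.finrank ℝ (C i)) = (-1 : ℤ) ^ n := stmt4' σ hσ hσdim C hC hcover hdisj hpart
end

section
/- Let σ ⊆ N_ℝ be a strictly convex rational polyhedral cone with dual cone σ^∨ ⊆ M_ℝ, and let f ∈ k[M ∩ σ^∨] be a nonzero element with support S. Then the set difference σ^∨ \ Δ is bounded if and only if S meets every one-dimensional face (ray) of σ^∨, where Δ is the convex hull of ∪_{m ∈ S} (m + σ^∨). -/
/-- A face of a cone `C`, cut out by a linear functional nonnegative on `C`. -/
def IsFaceOfCone {n : ℕ} (F C : Set (Fin n → ℝ)) : Prop :=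
  ∃ φ : (Fin n → ℝ) →ₗ[ℝ] ℝ, (∀ x ∈ C, 0 ≤ φ x) ∧ F = {x ∈ C | φ x = 0}

/-- The embedding `M = ℤⁿ → M_ℝ = ℝⁿ`. -/
def latticeEmb {n : ℕ} (m : Fin n → ℤ) : Fin n → ℝ := fun i => (m i : ℝ)

/-- Any finite set can be shrunk to a subset with the same convex hull in which
every point is "extreme" (not in the hull of the others). -/
lemma exists_minimal_hull {E : Type*} [AddCommGroup E] [Module ℝ E] [DecidableEq E] (V : Finset E) :
    ∃ W : Finset E, W ⊆ V ∧ convexHull ℝ (W : Set E) = convexHull ℝ (V : Set E) ∧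
      ∀ u ∈ W, u ∉ convexHull ℝ ((W.erase u : Finset E) : Set E) := by
  induction V using Finset.strongInduction with
  | _ V ih =>
    by_cases h : ∀ u ∈ V, u ∉ convexHull ℝ ((V.erase u : Finset E) : Set E)
    · exact ⟨V, Finset.Subset.refl V, rfl, h⟩
    · push_neg at h
      obtain ⟨u, hu, hmem⟩ := h
      obtain ⟨W, hWsub, hWhull, hWmin⟩ := ih (V.erase u) (Finset.erase_ssubset hu)
      refine ⟨W, hWsub.trans (Finset.erase_subset _ _), ?_, hWmin⟩
      rw [hWhull]
      refine Set.Subset.antisymm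
        (convexHull_mono (by exact_mod_cast Finset.erase_subset u V)) ?_
      refine convexHull_min ?_ (convex_convexHull ℝ _)
      intro y hy
      rw [Finset.mem_coe] at hy
      by_cases hyu : y = u
      · subst hyu; exact hmem
      · exact subset_convexHull ℝ _ (Finset.mem_coe.2 (Finset.mem_erase.2 ⟨hyu, hy⟩))

/-- Let `C = σ^∨ ⊆ M_ℝ = ℝⁿ` be the dual of a full-dimensional strictly
convex rational polyhedral cone `σ`, so `C` is a full-dimensional pointed polyhedral cone.
Let `f ∈ k[M ∩ σ^∨]` be nonzero with support `S` and Newton polyhedron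
`Δ = Conv(⋃_{m ∈ S} (m + C))`.  Then `C \ Δ` is bounded (i.e. `f` is convenient) iff `S`
meets every one-dimensional face (ray) of `C`. -/
theorem stmt10 {n : ℕ} {k : Type*} [Field k]
    (C : Set (Fin n → ℝ)) (hC : IsPolyhedralCone C)
    (hdim : Set.finrank ℝ C = n)
    (hpointed : ∀ x ∈ C, -x ∈ C → x = 0)
    (f : AddMonoidAlgebra k (Fin n → ℤ)) (hf : f ≠ 0)
    (hsupp : ∀ m ∈ f.coeff.support, latticeEmb m ∈ C) :
    Bornology.IsBounded
        (C \ convexHull ℝ (⋃ m ∈ f.coeff.support, (fun x => latticeEmb m + x) '' C)) ↔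
    ∀ F : Set (Fin n → ℝ), IsFaceOfCone F C → Set.finrank ℝ F = 1 →
      ∃ m ∈ f.coeff.support, latticeEmb m ∈ F := by
  classical
  obtain ⟨m, v, hCdef⟩ := hC
  set U : Set (Fin n → ℝ) := ⋃ m ∈ f.coeff.support, (fun x => latticeEmb m + x) '' C with hU
  set Δ : Set (Fin n → ℝ) := convexHull ℝ U with hΔ
  -- basic cone facts
  have hvC : ∀ i, v i ∈ C := by
    intro i
    rw [hCdef]
    refine ⟨fun j => if j = i then (1:ℝ) else 0, fun j => by positivity, ?_⟩
    simp [ite_smul]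
  have hsmulC : ∀ (t : ℝ), 0 ≤ t → ∀ x ∈ C, t • x ∈ C := by
    intro t ht x hx
    rw [hCdef] at hx ⊢
    obtain ⟨c, hc, rfl⟩ := hx
    exact ⟨fun i => t * c i, fun i => mul_nonneg ht (hc i),
      by rw [Finset.smul_sum]; simp [smul_smul]⟩
  have haddC : ∀ x ∈ C, ∀ y ∈ C, x + y ∈ C := by
    intro x hx y hy
    rw [hCdef] at hx hy ⊢
    obtain ⟨c, hc, rfl⟩ := hx
    obtain ⟨d, hd, rfl⟩ := hy
    exact ⟨fun i => c i + d i, fun i => add_nonneg (hc i) (hd i),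
      by rw [← Finset.sum_add_distrib]; simp [add_smul]⟩
  have hC0 : (0 : Fin n → ℝ) ∈ C := by
    rw [hCdef]; exact ⟨0, fun i => le_refl 0, by simp⟩
  have hconic : ∀ {ι : Type} (t : Finset ι) (w : ι → ℝ) (z : ι → Fin n → ℝ),
      (∀ i ∈ t, 0 ≤ w i) → (∀ i ∈ t, z i ∈ C) → (∑ i ∈ t, w i • z i) ∈ C := by
    intro ι t w z hw hz
    induction t using Finset.induction with
    | empty => simpa using hC0
    | @insert a s ha ih =>
      rw [Finset.sum_insert ha]
      exact haddC _ (hsmulC _ (hw a (Finset.mem_insert_self a s)) _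
          (hz a (Finset.mem_insert_self a s))) _
        (ih (fun i hi => hw i (Finset.mem_insert_of_mem hi))
          (fun i hi => hz i (Finset.mem_insert_of_mem hi)))
  constructor
  · -- bounded → support meets every ray
    intro hbdd F hFace hFrank
    by_contra hno
    push_neg at hno
    obtain ⟨φF, hφF, hFeq⟩ := hFace
    have hSne : f.coeff.support.Nonempty := Finsupp.support_nonempty_iff.2 (mt AddMonoidAlgebra.coeff_eq_zero.1 hf)
    have hpos : ∀ m' ∈ f.coeff.support, 0 < φF (latticeEmb m') := by
      intro m' hm'
      rcases (hφF _ (hsupp m' hm')).lt_or_eq with h | h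
      · exact h
      · exact absurd (hFeq ▸ (⟨hsupp m' hm', h.symm⟩ : latticeEmb m' ∈
          {x ∈ C | φF x = 0})) (hno m' hm')
    set ε := f.coeff.support.inf' hSne (fun m' => φF (latticeEmb m')) with hε
    have hεpos : 0 < ε := (Finset.lt_inf'_iff hSne).2 hpos
    have hΔsub : Δ ⊆ {x | ε ≤ φF x} := by
      refine convexHull_min ?_ (convex_halfSpace_ge (LinearMap.isLinear φF) ε)
      intro x hx
      rw [hU, Set.mem_iUnion₂] at hx
      obtain ⟨m', hm', y, hy, rfl⟩ := hx
      have h1 : ε ≤ φF (latticeEmb m') := Finset.inf'_le _ hm'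
      have h2 := hφF y hy
      simp only [Set.mem_setOf_eq, map_add]
      linarith
    have hFne : ∃ r ∈ F, r ≠ (0 : Fin n → ℝ) := by
      by_contra h
      push_neg at h
      have hsub : F ⊆ {(0 : Fin n → ℝ)} := fun x hx => h x hx
      have hle : Submodule.span ℝ F ≤ ⊥ := by
        rw [← Submodule.span_zero_singleton (R := ℝ)]
        exact Submodule.span_mono hsub
      have : Submodule.span ℝ F = ⊥ := le_bot_iff.1 hle
      unfold Set.finrank at hFrank
      rw [this, finrank_bot] at hFrank
      exact absurd hFrank (by norm_num)
    obtain ⟨r, hrF, hr0⟩ := hFne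
    have hrC : r ∈ C := by rw [hFeq] at hrF; exact hrF.1
    have hrφ : φF r = 0 := by rw [hFeq] at hrF; exact hrF.2
    obtain ⟨R, hR⟩ := hbdd.exists_norm_le
    have hrn : (0:ℝ) < ‖r‖ := norm_pos_iff.2 hr0
    set t := (|R| + 1) / ‖r‖ with htdef
    have ht : 0 < t := by positivity
    have htr : t • r ∈ C \ Δ := by
      refine ⟨hsmulC t ht.le r hrC, fun hmem => ?_⟩
      have hcontra := hΔsub hmem
      simp only [Set.mem_setOf_eq, map_smul, smul_eq_mul, hrφ, mul_zero] at hcontra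
      linarith
    have hb := hR _ htr
    rw [norm_smul, Real.norm_eq_abs, abs_of_pos ht, htdef,
      div_mul_cancel₀ _ (ne_of_gt hrn)] at hb
    have := le_abs_self R
    linarith
  · -- support meets every ray → bounded
    intro hfaces
    by_cases h0 : ∃ m₀ ∈ f.coeff.support, latticeEmb m₀ = 0
    · obtain ⟨m₀, hm₀, hm₀0⟩ := h0
      have hempty : C \ Δ = ∅ := by
        rw [Set.diff_eq_empty]
        intro x hx
        refine subset_convexHull ℝ U ?_
        rw [hU]
        exact Set.mem_biUnion hm₀ ⟨x, hx, by simp [hm₀0]⟩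
      rw [hempty]
      exact Bornology.isBounded_empty
    push_neg at h0
    -- a functional positive on nonzero generators
    have hD : (0 : Fin n → ℝ) ∉ convexHull ℝ (v '' {i | v i ≠ 0}) := by
      intro hmem
      rw [convexHull_eq] at hmem
      obtain ⟨ι, t, w, z, hw0, hw1, hz, hcm⟩ := hmem
      rw [Finset.centerMass_eq_of_sum_1 _ _ hw1] at hcm
      have hzC : ∀ i ∈ t, z i ∈ C := by
        intro i hi
        obtain ⟨j, _, hje⟩ := hz i hi
        exact hje ▸ hvC j
      have hzne : ∀ i ∈ t, z i ≠ 0 := by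
        intro i hi
        obtain ⟨j, hj, hje⟩ := hz i hi
        exact hje ▸ hj
      obtain ⟨i₀, hi₀t, hi₀⟩ : ∃ i ∈ t, 0 < w i := by
        by_contra hcon
        push_neg at hcon
        have hzero : ∑ i ∈ t, w i = 0 :=
          Finset.sum_eq_zero fun i hi => le_antisymm (hcon i hi) (hw0 i hi)
        rw [hw1] at hzero
        norm_num at hzero
      have hxC : w i₀ • z i₀ ∈ C := hsmulC _ hi₀.le _ (hzC _ hi₀t)
      have hsum : w i₀ • z i₀ + ∑ i ∈ t.erase i₀, w i • z i = 0 := by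
        rw [Finset.add_sum_erase _ (fun i => w i • z i) hi₀t]; exact hcm
      have hnegC : -(w i₀ • z i₀) ∈ C := by
        have hrest : ∑ i ∈ t.erase i₀, w i • z i ∈ C :=
          hconic _ _ _ (fun i hi => hw0 i (Finset.mem_of_mem_erase hi))
            (fun i hi => hzC i (Finset.mem_of_mem_erase hi))
        rw [neg_eq_of_add_eq_zero_right hsum]
        exact hrest
      have := hpointed _ hxC hnegC
      exact smul_ne_zero (ne_of_gt hi₀) (hzne _ hi₀t) this
    have hDclosed : IsClosed (convexHull ℝ (v '' {i | v i ≠ 0})) :=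
      (((Set.toFinite {i | v i ≠ 0}).image v).isCompact_convexHull ℝ).isClosed
    obtain ⟨φ, u₀, hφ0, hφD⟩ :=
      geometric_hahn_banach_point_closed (convex_convexHull ℝ _) hDclosed hD
    have hu₀ : 0 < u₀ := by simpa using hφ0
    have hφv : ∀ i, v i ≠ 0 → 0 < φ (v i) := fun i hi =>
      hu₀.trans (hφD _ (subset_convexHull ℝ _ ⟨i, hi, rfl⟩))
    -- normalized generators and minimal subset
    set V' : Finset (Fin n → ℝ) :=
      (Finset.univ.filter (fun i => v i ≠ 0)).image (fun i => (φ (v i))⁻¹ • v i) with hV'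
    obtain ⟨W, hWV', hWhull, hWmin⟩ := exists_minimal_hull V'
    have hWprop : ∀ u ∈ W, u ∈ C ∧ φ u = 1 := by
      intro u hu
      have hmem := hWV' hu
      rw [hV', Finset.mem_image] at hmem
      obtain ⟨i, hi, rfl⟩ := hmem
      rw [Finset.mem_filter] at hi
      refine ⟨hsmulC _ (inv_nonneg.2 (hφv i hi.2).le) _ (hvC i), ?_⟩
      rw [map_smul, smul_eq_mul, inv_mul_cancel₀ (ne_of_gt (hφv i hi.2))]
    -- the cone generated by W contains C
    set coneW : Set (Fin n → ℝ) :=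
      {x | ∃ b : (Fin n → ℝ) → ℝ, (∀ y ∈ W, 0 ≤ b y) ∧ x = ∑ y ∈ W, b y • y} with hconeW
    have hcone0 : (0 : Fin n → ℝ) ∈ coneW := ⟨0, fun y _ => le_refl 0, by simp⟩
    have hconeadd : ∀ x y : Fin n → ℝ, x ∈ coneW → y ∈ coneW → x + y ∈ coneW := by
      rintro x y ⟨b, hb, rfl⟩ ⟨b', hb', rfl⟩
      exact ⟨b + b', fun y hy => add_nonneg (hb y hy) (hb' y hy),
        by rw [← Finset.sum_add_distrib]; simp [add_smul]⟩
    have hconesmul : ∀ (t : ℝ), 0 ≤ t → ∀ x ∈ coneW, t • x ∈ coneW := by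
      rintro t ht x ⟨b, hb, rfl⟩
      exact ⟨fun y => t * b y, fun y hy => mul_nonneg ht (hb y hy),
        by rw [Finset.smul_sum]; simp [smul_smul]⟩
    have hvcone : ∀ i, v i ∈ coneW := by
      intro i
      by_cases hvi : v i = 0
      · rw [hvi]; exact hcone0
      · have hmem : (φ (v i))⁻¹ • v i ∈ convexHull ℝ (W : Set (Fin n → ℝ)) := by
          rw [hWhull]
          refine subset_convexHull ℝ _ ?_
          rw [Finset.mem_coe, hV', Finset.mem_image]
          exact ⟨i, Finset.mem_filter.2 ⟨Finset.mem_univ i, hvi⟩, rfl⟩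
        rw [Finset.convexHull_eq] at hmem
        obtain ⟨w, hw0, hw1, hcm⟩ := hmem
        rw [Finset.centerMass_eq_of_sum_1 _ _ hw1] at hcm
        refine ⟨fun y => φ (v i) * w y, fun y hy => mul_nonneg (hφv i hvi).le (hw0 y hy), ?_⟩
        have hvii : (φ (v i)) • ((φ (v i))⁻¹ • v i) = v i := by
          rw [smul_smul, mul_inv_cancel₀ (ne_of_gt (hφv i hvi)), one_smul]
        calc v i = (φ (v i)) • ((φ (v i))⁻¹ • v i) := hvii.symm
          _ = (φ (v i)) • ∑ y ∈ W, w y • id y := by rw [hcm]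
          _ = ∑ y ∈ W, (φ (v i) * w y) • y := by
              rw [Finset.smul_sum]
              exact Finset.sum_congr rfl fun y _ => by simp [smul_smul]
    have hCcone : ∀ x ∈ C, x ∈ coneW := by
      intro x hx
      rw [hCdef] at hx
      obtain ⟨c, hc, rfl⟩ := hx
      exact Finset.sum_induction _ (· ∈ coneW) hconeadd hcone0
        (fun i _ => hconesmul _ (hc i) _ (hvcone i))
    -- every element of W spans a 1-dimensional face, hence carries a support point
    have hray : ∀ u : Fin n → ℝ, ∃ (mu : Fin n → ℤ) (tu : ℝ), u ∈ W →
        mu ∈ f.coeff.support ∧ 0 < tu ∧ latticeEmb mu = tu • u := by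
      intro u
      by_cases hu : u ∈ W
      swap
      · exact ⟨0, 1, fun h => absurd h hu⟩
      obtain ⟨huC, huφ⟩ := hWprop u hu
      have hune : u ≠ 0 := by
        intro h
        rw [h, map_zero] at huφ
        norm_num at huφ
      have hclosed : IsClosed (convexHull ℝ ((W.erase u : Finset (Fin n → ℝ)) :
          Set (Fin n → ℝ))) := ((W.erase u).finite_toSet.isCompact_convexHull ℝ).isClosed
      obtain ⟨ψ, c, hψu, hψ⟩ :=
        geometric_hahn_banach_point_closed (convex_convexHull ℝ _) hclosed (hWmin u hu)
      set φu : (Fin n → ℝ) →ₗ[ℝ] ℝ :=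
        (ψ : (Fin n → ℝ) →ₗ[ℝ] ℝ) - (ψ u) • (φ : (Fin n → ℝ) →ₗ[ℝ] ℝ) with hφudef
      have hφuval : ∀ x, φu x = ψ x - ψ u * φ x := by
        intro x; simp [hφudef, smul_eq_mul]
      have hφuu : φu u = 0 := by rw [hφuval, huφ]; ring
      have hφuw : ∀ y ∈ W, y ≠ u → 0 < φu y := by
        intro y hy hyne
        have hyW : y ∈ W.erase u := Finset.mem_erase.2 ⟨hyne, hy⟩
        have h1 : c < ψ y := hψ _ (subset_convexHull ℝ _ (Finset.mem_coe.2 hyW))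
        rw [hφuval, (hWprop y hy).2, mul_one]
        linarith
      have hφuC : ∀ x ∈ C, 0 ≤ φu x := by
        intro x hx
        obtain ⟨b, hb, rfl⟩ := hCcone x hx
        rw [map_sum]
        refine Finset.sum_nonneg ?_
        intro y hy
        rw [map_smul, smul_eq_mul]
        by_cases hyu : y = u
        · rw [hyu, hφuu, mul_zero]
        · exact mul_nonneg (hb y hy) (hφuw y hy hyu).le
      have hface : IsFaceOfCone {x | ∃ t : ℝ, 0 ≤ t ∧ x = t • u} C := by
        refine ⟨φu, hφuC, ?_⟩
        ext x
        simp only [Set.mem_setOf_eq]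
        constructor
        · rintro ⟨t, ht, rfl⟩
          exact ⟨hsmulC t ht u huC, by rw [map_smul, smul_eq_mul, hφuu, mul_zero]⟩
        · rintro ⟨hxC, hx0⟩
          obtain ⟨b, hb, rfl⟩ := hCcone _ hxC
          rw [map_sum] at hx0
          have hterm : ∀ y ∈ W, 0 ≤ φu (b y • y) := by
            intro y hy
            rw [map_smul, smul_eq_mul]
            by_cases hyu : y = u
            · rw [hyu, hφuu, mul_zero]
            · exact mul_nonneg (hb y hy) (hφuw y hy hyu).le
          have hzero : ∀ y ∈ W, φu (b y • y) = 0 :=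
            (Finset.sum_eq_zero_iff_of_nonneg hterm).1 hx0
          have hb0 : ∀ y ∈ W, y ≠ u → b y = 0 := by
            intro y hy hyu
            have := hzero y hy
            rw [map_smul, smul_eq_mul] at this
            rcases mul_eq_zero.1 this with h | h
            · exact h
            · exact absurd h (ne_of_gt (hφuw y hy hyu))
          refine ⟨b u, hb u hu, ?_⟩
          rw [Finset.sum_eq_single_of_mem u hu]
          intro y hy hyu
          rw [hb0 y hy hyu, zero_smul]
      have hrank : Set.finrank ℝ {x | ∃ t : ℝ, 0 ≤ t ∧ x = t • u} = 1 := by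
        have hspan : Submodule.span ℝ {x | ∃ t : ℝ, 0 ≤ t ∧ x = t • u} =
            Submodule.span ℝ {u} := by
          apply le_antisymm
          · rw [Submodule.span_le]
            rintro x ⟨t, _, rfl⟩
            exact Submodule.smul_mem _ t
              (Submodule.subset_span (Set.mem_singleton u))
          · rw [Submodule.span_le]
            rintro x hx
            rw [Set.mem_singleton_iff] at hx
            subst hx
            exact Submodule.subset_span ⟨1, zero_le_one, (one_smul ℝ x).symm⟩
        unfold Set.finrank
        rw [hspan]
        exact finrank_span_singleton hune
      obtain ⟨mu, hmu, hmuF⟩ := hfaces _ hface hrank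
      obtain ⟨tu, htu, htue⟩ := hmuF
      have htne : tu ≠ 0 := by
        intro h
        exact (h0 mu hmu) (by rw [htue, h, zero_smul])
      exact ⟨mu, tu, fun _ => ⟨hmu, lt_of_le_of_ne htu (Ne.symm htne), htue⟩⟩
    choose mfun tfun hray using hray
    -- final boundedness estimate
    set R' := ∑ u ∈ W, ‖latticeEmb (mfun u)‖ with hR'
    refine (Metric.isBounded_closedBall (x := (0 : Fin n → ℝ)) (r := R')).subset ?_
    rintro x ⟨hxC, hxΔ⟩
    obtain ⟨b, hb, rfl⟩ := hCcone x hxC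
    set A := ∑ u ∈ W, b u / tfun u with hA
    have hA0 : ∀ u ∈ W, 0 ≤ b u / tfun u :=
      fun u hu => div_nonneg (hb u hu) (hray u hu).2.1.le
    have hbu : ∀ u ∈ W, (b u / tfun u) • latticeEmb (mfun u) = b u • u := by
      intro u hu
      rw [(hray u hu).2.2, smul_smul, div_mul_cancel₀ _ (ne_of_gt (hray u hu).2.1)]
    by_cases hA1 : 1 ≤ A
    · exfalso
      apply hxΔ
      have hApos : (0:ℝ) < A := lt_of_lt_of_le one_pos hA1
      have hzU : ∀ u ∈ W, A • latticeEmb (mfun u) ∈ U := by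
        intro u hu
        rw [hU, Set.mem_iUnion₂]
        refine ⟨mfun u, (hray u hu).1, ?_⟩
        refine ⟨(A - 1) • latticeEmb (mfun u), ?_, ?_⟩
        · exact hsmulC _ (by linarith) _ (hsupp _ (hray u hu).1)
        · have : A • latticeEmb (mfun u) =
              latticeEmb (mfun u) + (A - 1) • latticeEmb (mfun u) := by
            rw [sub_smul, one_smul]; abel
          exact this.symm
      have hcm := Finset.centerMass_mem_convexHull (s := U) W
        (w := fun u => b u / tfun u) (z := fun u => A • latticeEmb (mfun u))
        hA0 (by rw [← hA]; exact hApos) hzU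
      have hkey : W.centerMass (fun u => b u / tfun u)
          (fun u => A • latticeEmb (mfun u)) = ∑ y ∈ W, b y • y := by
        rw [Finset.centerMass, ← hA]
        have hswap : ∑ u ∈ W, (b u / tfun u) • (A • latticeEmb (mfun u)) =
            A • ∑ u ∈ W, (b u / tfun u) • latticeEmb (mfun u) := by
          rw [Finset.smul_sum]
          exact Finset.sum_congr rfl fun u hu => smul_comm _ _ _
        rw [hswap, smul_smul, inv_mul_cancel₀ (ne_of_gt hApos), one_smul]
        exact Finset.sum_congr rfl hbu
      rw [hkey] at hcm
      exact hcm
    · push_neg at hA1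
      rw [Metric.mem_closedBall, dist_zero_right]
      have hle : ∀ u ∈ W, ‖b u • u‖ ≤ ‖latticeEmb (mfun u)‖ := by
        intro u hu
        have hau : b u / tfun u ≤ A := Finset.single_le_sum hA0 hu
        rw [← hbu u hu, norm_smul, Real.norm_eq_abs, abs_of_nonneg (hA0 u hu)]
        calc (b u / tfun u) * ‖latticeEmb (mfun u)‖
            ≤ 1 * ‖latticeEmb (mfun u)‖ :=
              mul_le_mul_of_nonneg_right (le_of_lt (lt_of_le_of_lt hau hA1))
                (norm_nonneg _)
          _ = ‖latticeEmb (mfun u)‖ := one_mul _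
      calc ‖∑ y ∈ W, b y • y‖ ≤ ∑ y ∈ W, ‖b y • y‖ := norm_sum_le _ _
        _ ≤ R' := Finset.sum_le_sum hle
end
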